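/- For g = (a,b,c,r,v) ∈ G̃ define the linear map A(g) : ℝ⁵ → ℝ⁵ by A(g)(α₁,α₂,α₃,ρ,μ) = (α₁+bα₃−cμ, α₂−aα₃−(r+a²/2)μ, α₃+aμ, ρ+bμ, μ) (the coadjoint action of G̃). Then: (i) A((0,0,0,0,0)) = id and A(g₁⋆g₂) = A(g₁)∘A(g₂) for all g₁,g₂ ∈ G̃, so A is an action of G̃ by linear automorphisms of ℝ⁵; (ii) the last coordinate μ is invariant under the action; (iii) for every μ ≠ 0 and every (α₁,α₂,α₃,ρ), the orbit of (α₁,α₂,α₃,ρ,μ) is exactly {(β₁,β₂,β₃,σ,μ) : β₁,β₂,β₃,σ ∈ ℝ} (a four-dimensional orbit); (iv) for every α₃ ≠ 0 and ρ ∈ ℝ, the orbit of (0,0,α₃,ρ,0) is exactly {(β₁,β₂,α₃,ρ,0) : β₁,β₂ ∈ ℝ} (a two-dimensional orbit); (v) every point of the form (α₁,α₂,0,ρ,0) is a fixed point of the action. -/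

import Mathlib

noncomputable section

/-- The underlying set `ℝ⁵` of the group `G̃`. -/
abbrev G5 : Type := ℝ × ℝ × ℝ × ℝ × ℝ

/-- Multiplication on `G̃`. -/
def gtmul (g₁ g₂ : G5) : G5 :=
  (g₁.1 + g₂.1, g₁.2.1 + g₂.2.1, g₁.2.2.1 + g₂.2.2.1 - g₁.2.1 * g₂.1,
   g₁.2.2.2.1 + g₂.2.2.2.1,
   g₁.2.2.2.2 + g₂.2.2.2.2 + g₁.2.2.1 * g₂.1 - (1 / 2) * g₁.2.1 * g₂.1 ^ 2
     + g₁.2.2.2.1 * g₂.2.1)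

/-- The coadjoint action: for `g = (a,b,c,r,v)`,
`A(g)(α₁,α₂,α₃,ρ,μ) = (α₁+bα₃−cμ, α₂−aα₃−(r+a²/2)μ, α₃+aμ, ρ+bμ, μ)`. -/
def Acoad (g : G5) (α : G5) : G5 :=
  (α.1 + g.2.1 * α.2.2.1 - g.2.2.1 * α.2.2.2.2,
   α.2.1 - g.1 * α.2.2.1 - (g.2.2.2.1 + g.1 ^ 2 / 2) * α.2.2.2.2,
   α.2.2.1 + g.1 * α.2.2.2.2,
   α.2.2.2.1 + g.2.1 * α.2.2.2.2,
   α.2.2.2.2)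

/-- The coadjoint action of `G̃`: it is an action by linear automorphisms,
preserves `μ`, has the displayed 4- and 2-dimensional orbits, and fixes the
points `(α₁,α₂,0,ρ,0)`. -/
theorem stmt10 :
    -- (i) A is an action by linear maps
    (∀ α : G5, Acoad ((0 : ℝ), (0 : ℝ), (0 : ℝ), (0 : ℝ), (0 : ℝ)) α = α) ∧
    (∀ g₁ g₂ : G5, ∀ α : G5, Acoad (gtmul g₁ g₂) α = Acoad g₁ (Acoad g₂ α)) ∧
    (∀ g : G5, IsLinearMap ℝ (Acoad g)) ∧
    -- (ii) the last coordinate μ is invariant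
    (∀ g α : G5, (Acoad g α).2.2.2.2 = α.2.2.2.2) ∧
    -- (iii) four-dimensional orbits for μ ≠ 0
    (∀ μ : ℝ, μ ≠ 0 → ∀ α1 α2 α3 ρ : ℝ,
      {w : G5 | ∃ g : G5, w = Acoad g (α1, α2, α3, ρ, μ)} =
        {w : G5 | ∃ β1 β2 β3 σ : ℝ, w = (β1, β2, β3, σ, μ)}) ∧
    -- (iv) two-dimensional orbits for μ = 0, α₃ ≠ 0
    (∀ α3 : ℝ, α3 ≠ 0 → ∀ ρ : ℝ,
      {w : G5 | ∃ g : G5, w = Acoad g ((0 : ℝ), (0 : ℝ), α3, ρ, (0 : ℝ))} =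
        {w : G5 | ∃ β1 β2 : ℝ, w = (β1, β2, α3, ρ, (0 : ℝ))}) ∧
    -- (v) fixed points
    (∀ α1 α2 ρ : ℝ, ∀ g : G5,
      Acoad g (α1, α2, (0 : ℝ), ρ, (0 : ℝ)) = (α1, α2, (0 : ℝ), ρ, (0 : ℝ))) := by
  refine ⟨?_, ?_, ?_, ?_, ?_, ?_, ?_⟩
  · rintro ⟨a1,a2,a3,r,m⟩; simp [Acoad]
  · rintro ⟨a,b,c,r,v⟩ ⟨a',b',c',r',v'⟩ ⟨a1,a2,a3,rr,m⟩
    simp only [Acoad, gtmul, Prod.mk.injEq]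
    refine ⟨by ring, by ring, by ring, by ring, trivial⟩
  · rintro ⟨a,b,c,r,v⟩
    constructor
    · rintro ⟨x1,x2,x3,x4,x5⟩ ⟨y1,y2,y3,y4,y5⟩
      simp only [Acoad, Prod.mk.injEq, Prod.mk_add_mk]
      refine ⟨by ring, by ring, by ring, by ring, trivial⟩
    · rintro t ⟨x1,x2,x3,x4,x5⟩
      simp only [Acoad, Prod.mk.injEq, Prod.smul_mk, smul_eq_mul]
      refine ⟨by ring, by ring, by ring, by ring, trivial⟩
  · rintro ⟨a,b,c,r,v⟩ ⟨a1,a2,a3,rr,m⟩; rfl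
  · intro μ hμ α1 α2 α3 ρ
    ext ⟨w1,w2,w3,w4,w5⟩
    simp only [Set.mem_setOf_eq]
    constructor
    · rintro ⟨⟨a,b,c,r,v⟩, h⟩
      simp only [Acoad, Prod.mk.injEq] at h
      exact ⟨w1, w2, w3, w4, by
        obtain ⟨h1,h2,h3,h4,h5⟩ := h
        simp [h5]⟩
    · rintro ⟨β1, β2, β3, σ, h⟩
      simp only [Prod.mk.injEq] at h
      obtain ⟨rfl, rfl, rfl, rfl, rfl⟩ := h
      refine ⟨((w3-α3)/w5, (w4-ρ)/w5, (α1 + (w4-ρ)/w5*α3 - w1)/w5,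
        (α2 - (w3-α3)/w5*α3 - w2)/w5 - ((w3-α3)/w5)^2/2, 0), ?_⟩
      simp only [Acoad, Prod.mk.injEq]
      refine ⟨by field_simp; ring, by field_simp; ring, by field_simp; ring, by field_simp; ring, trivial⟩
  · intro α3 h3 ρ
    ext ⟨w1,w2,w3,w4,w5⟩
    simp only [Set.mem_setOf_eq]
    constructor
    · rintro ⟨⟨a,b,c,r,v⟩, h⟩
      simp only [Acoad, Prod.mk.injEq] at h
      obtain ⟨h1,h2,h3',h4,h5⟩ := h
      exact ⟨w1, w2, by simp_all⟩
    · rintro ⟨β1, β2, h⟩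
      simp only [Prod.mk.injEq] at h
      obtain ⟨rfl, rfl, rfl, rfl, rfl⟩ := h
      refine ⟨(-w2/w3, w1/w3, 0, 0, 0), ?_⟩
      simp only [Acoad, Prod.mk.injEq]
      refine ⟨by field_simp; ring, by field_simp; ring, by ring, by ring, trivial⟩
  · intro α1 α2 ρ g
    simp [Acoad]


end
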